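/- arXiv:1402.3246 — 2 statements merged into one kernel-verified Lean document; each statement's English description precedes it below -/
import Mathlib

section
/- With the notation of the remainder forest: let b = 2^ℓ, 0 ≤ k ≤ ℓ, t = 2^{ℓ-k}. For 0 ≤ s < 2^k define m^s_j = m_{st+j}, A^s_j = A_{st+j} for 0 ≤ j < t, and V^s = V · A_0 ⋯ A_{st-1} mod (m_{st} ⋯ m_{b-1}). Let C^s_{i,j} be the accumulating remainder tree values built from V^s, the A^s_j, and the m^s_j. Then for all 0 ≤ i ≤ ℓ-k and 0 ≤ j < 2^i, C^s_{i,j} = C_{i+k, j + 2^i s}, where C_{i,j} denotes the corresponding node of the full remainder tree built from V, the A_j, and the m_j. -/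
open Matrix Finset

/-- Componentwise reduction of an integer vector modulo a positive integer. -/
def vmod {r : ℕ} (w : Fin r → ℤ) (M : ℕ) : Fin r → ℤ := fun i => w i % (M : ℤ)

/-- Ordered product A_a · A_{a+1} ⋯ A_{b-1} of a sequence of matrices. -/
def prodA {r : ℕ} (A : ℕ → Matrix (Fin r) (Fin r) ℤ) (a b : ℕ) :
    Matrix (Fin r) (Fin r) ℤ :=
  ((List.range' a (b - a)).map A).prod


lemma prodA_split {r : ℕ} (A : ℕ → Matrix (Fin r) (Fin r) ℤ) {a b c : ℕ}
    (hab : a ≤ b) (hbc : b ≤ c) : prodA A a c = prodA A a b * prodA A b c := by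
  unfold prodA
  rw [← List.prod_append, ← List.map_append]
  have h := @List.range'_append a (b - a) (c - b) 1
  rw [one_mul] at h
  rw [show a + (b - a) = b from by omega] at h
  rw [h, show b - a + (c - b) = c - a from by omega]

lemma vmod_vecMul {r : ℕ} (w : Fin r → ℤ) (B : Matrix (Fin r) (Fin r) ℤ)
    (M n : ℕ) (h : n ∣ M) :
    vmod (Matrix.vecMul (vmod w M) B) n = vmod (Matrix.vecMul w B) n := by
  funext v
  simp only [vmod, Matrix.vecMul, dotProduct]
  rw [Finset.sum_int_mod, Finset.sum_int_mod (f := fun i => w i * B i v)]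
  congr 1
  refine Finset.sum_congr rfl fun i _ => ?_
  rw [Int.mul_emod, Int.emod_emod_of_dvd _ (Int.natCast_dvd_natCast.mpr h), ← Int.mul_emod]

/-- Remainder forest: the accumulating remainder tree built from the shifted data
(V^s, A^s_j = A_{st+j}, m^s_j = m_{st+j}), where V^s = V·A₀⋯A_{st-1} mod m_{st}⋯m_{b-1},
agrees with the corresponding subtree of the full remainder tree: C^s_{i,j} = C_{i+k, j+2^i s}. -/
theorem remainderForest_subtree_eq (ℓ k r : ℕ) (hk : k ≤ ℓ)
    (A : ℕ → Matrix (Fin r) (Fin r) ℤ) (m : ℕ → ℕ) (V : Fin r → ℤ)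
    (hmpos : ∀ u, 0 < m u) :
    let b := 2 ^ ℓ
    let t := 2 ^ (ℓ - k)
    let mnode : ℕ → ℕ → ℕ :=
      fun i j => ∏ u ∈ Finset.Ico (j * 2 ^ (ℓ - i)) ((j + 1) * 2 ^ (ℓ - i)), m u
    let Cnode : ℕ → ℕ → (Fin r → ℤ) :=
      fun i j => vmod (Matrix.vecMul V (prodA A 0 (j * 2 ^ (ℓ - i)))) (mnode i j)
    let Vs : ℕ → (Fin r → ℤ) :=
      fun s => vmod (Matrix.vecMul V (prodA A 0 (s * t))) (∏ u ∈ Finset.Ico (s * t) b, m u)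
    let msnode : ℕ → ℕ → ℕ → ℕ :=
      fun s i j => ∏ u ∈ Finset.Ico (s * t + j * 2 ^ (ℓ - k - i))
        (s * t + (j + 1) * 2 ^ (ℓ - k - i)), m u
    let Csnode : ℕ → ℕ → ℕ → (Fin r → ℤ) :=
      fun s i j => vmod (Matrix.vecMul (Vs s) (prodA A (s * t) (s * t + j * 2 ^ (ℓ - k - i))))
        (msnode s i j)
    ∀ s < 2 ^ k, ∀ i ≤ ℓ - k, ∀ j < 2 ^ i,
      Csnode s i j = Cnode (i + k) (j + 2 ^ i * s) := by
  intro b t mnode Cnode Vs msnode Csnode s hs i hi j hj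
  simp only [Csnode, Cnode, Vs, msnode, mnode]
  have hte : t = 2 ^ i * 2 ^ (ℓ - k - i) := by
    show 2 ^ (ℓ - k) = _
    rw [← pow_add]
    congr 1
    omega
  have he : ℓ - (i + k) = ℓ - k - i := by omega
  have hidx : (j + 2 ^ i * s) * 2 ^ (ℓ - (i + k)) = s * t + j * 2 ^ (ℓ - k - i) := by
    rw [he, hte]; ring
  have hidx2 : (j + 2 ^ i * s + 1) * 2 ^ (ℓ - (i + k)) = s * t + (j + 1) * 2 ^ (ℓ - k - i) := by
    rw [he, hte]; ring
  rw [hidx, hidx2,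
    prodA_split A (Nat.zero_le (s * t)) (Nat.le_add_right _ _), ← Matrix.vecMul_vecMul]
  refine vmod_vecMul _ _ _ _ (Finset.prod_dvd_prod_of_subset _ _ m (Finset.Ico_subset_Ico ?_ ?_))
  · exact Nat.le_add_right _ _
  · show s * 2 ^ (ℓ - k) + (j + 1) * 2 ^ (ℓ - k - i) ≤ 2 ^ ℓ
    have h1 : (j + 1) * 2 ^ (ℓ - k - i) ≤ 2 ^ (ℓ - k) := by
      calc (j + 1) * 2 ^ (ℓ - k - i) ≤ 2 ^ i * 2 ^ (ℓ - k - i) := Nat.mul_le_mul_right _ hj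
        _ = 2 ^ (ℓ - k) := by rw [← pow_add]; congr 1; omega
    have h2 : (s + 1) * 2 ^ (ℓ - k) ≤ 2 ^ ℓ := by
      calc (s + 1) * 2 ^ (ℓ - k) ≤ 2 ^ k * 2 ^ (ℓ - k) := Nat.mul_le_mul_right _ hs
        _ = 2 ^ ℓ := by rw [← pow_add]; congr 1; omega
    rw [add_mul, one_mul] at h2
    omega
end

section
/- Let f = f_4 x⁴ + f_3 x³ + f_2 x² + f_1 x + f_0 over ℚ with f_0 f_4 ≠ 0. Define for n ≥ 0 the row vector v_n = [f^n_{2n-3}, f^n_{2n-2}, f^n_{2n-1}, f^n_{2n}] (coefficients of f^n, zero for negative index). Then for all n ≥ 3, D_n · v_{n+1} = v_n · M_n, where D_n = 2(n+2)(2n+1)(2n+5) f_0 f_4 and M_n is the explicit 4×4 matrix with entries given in terms of J_1 = (n+1)(2n+1) f_0, J_2 = (n+1)(2n+1)(2n+5) f_0 f_4, J_3 = 2(n+1)(n+2)(2n+5) f_0 f_4, J_4 = (n+2)(2n+5) f_4 by: column 1 entries (-(n+3) f_3² + 4(n+2) f_2 f_4) J_1, (-2 f_2 f_3 + 6(n+2)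 f_1 f_4) J_1, ((n-1) f_1 f_3 + 8(n+2) f_0 f_4) J_1, 2n f_0 f_3 J_1; column 2 entries f_3 J_2, 2 f_2 J_2, 3 f_1 J_2, 4 f_0 J_2; column 3 entries 4 f_4 J_3, 3 f_3 J_3, 2 f_2 J_3, f_1 J_3; column 4 entries (2n+3) f_1 f_4 J_4, (4(2n+1) f_0 f_4 + (n+2) f_1 f_3) J_4, (3(2n+1) f_0 f_3 + f_1 f_2) J_4, (2(2n+1) f_0 f_2 - n f_1²) J_4. -/
open Polynomial Finset Matrix

noncomputable def coeffZ {F : Type*} [Semiring F] (g : Polynomial F) (k : ℤ) : F :=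
  if 0 ≤ k then g.coeff k.toNat else 0

lemma coeffZ_add (g h : Polynomial ℚ) (m : ℤ) :
    coeffZ (g + h) m = coeffZ g m + coeffZ h m := by
  unfold coeffZ; split <;> simp

lemma coeffZ_term (c : ℚ) (j : ℕ) (g : Polynomial ℚ) (m : ℤ) :
    coeffZ (C c * X ^ j * g) m = c * coeffZ g (m - j) := by
  have hrw : C c * X ^ j * g = (C c * g) * X ^ j := by ring
  unfold coeffZ
  rw [hrw]
  by_cases h0 : 0 ≤ m
  · rw [if_pos h0, coeff_mul_X_pow']
    by_cases h1 : 0 ≤ m - (j : ℤ)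
    · rw [if_pos h1, if_pos (by omega : j ≤ m.toNat), coeff_C_mul]
      congr 2
      omega
    · rw [if_neg h1, if_neg (by omega), mul_zero]
  · rw [if_neg h0, if_neg (by omega), mul_zero]

lemma coeffZ_derivative (g : Polynomial ℚ) (m : ℤ) :
    coeffZ (derivative g) m = ((m : ℚ) + 1) * coeffZ g (m + 1) := by
  unfold coeffZ
  by_cases h0 : 0 ≤ m
  · rw [if_pos h0, if_pos (by omega), coeff_derivative]
    have ht : (m + 1).toNat = m.toNat + 1 := by omega
    rw [ht]
    have h2 : ((m.toNat : ℚ)) = (m : ℚ) := by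
      exact_mod_cast congrArg (Int.cast : ℤ → ℚ) (Int.toNat_of_nonneg h0)
    rw [h2]; ring
  · rw [if_neg h0]
    by_cases h1 : 0 ≤ m + 1
    · have hm : (m : ℚ) + 1 = 0 := by
        have : m = -1 := by omega
        rw [this]; norm_num
      rw [hm, zero_mul]
    · rw [if_neg h1, mul_zero]

lemma coeffZ_f_mul (f0 f1 f2 f3 f4 : ℚ) (f : Polynomial ℚ)
    (hf : f = C f4 * X ^ 4 + C f3 * X ^ 3 + C f2 * X ^ 2 + C f1 * X + C f0)
    (g : Polynomial ℚ) (m : ℤ) :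
    coeffZ (f * g) m = f0 * coeffZ g m + f1 * coeffZ g (m - 1) + f2 * coeffZ g (m - 2)
      + f3 * coeffZ g (m - 3) + f4 * coeffZ g (m - 4) := by
  have hrw : f * g = C f4 * X ^ 4 * g + C f3 * X ^ 3 * g + C f2 * X ^ 2 * g
      + C f1 * X ^ 1 * g + C f0 * X ^ 0 * g := by
    rw [hf]; ring
  rw [hrw, coeffZ_add, coeffZ_add, coeffZ_add, coeffZ_add,
    coeffZ_term, coeffZ_term, coeffZ_term, coeffZ_term, coeffZ_term]
  push_cast
  rw [sub_zero]
  ring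

/-- convolution with explicit indices -/
lemma conv5 (f0 f1 f2 f3 f4 : ℚ) (f : Polynomial ℚ)
    (hf : f = C f4 * X ^ 4 + C f3 * X ^ 3 + C f2 * X ^ 2 + C f1 * X + C f0)
    (n : ℕ) (m0 m1 m2 m3 m4 : ℤ)
    (e1 : m1 = m0 - 1) (e2 : m2 = m0 - 2) (e3 : m3 = m0 - 3) (e4 : m4 = m0 - 4) :
    coeffZ (f ^ (n + 1)) m0 = f0 * coeffZ (f ^ n) m0 + f1 * coeffZ (f ^ n) m1
      + f2 * coeffZ (f ^ n) m2 + f3 * coeffZ (f ^ n) m3 + f4 * coeffZ (f ^ n) m4 := by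
  subst e1 e2 e3 e4
  rw [show f ^ (n + 1) = f * f ^ n from by ring, coeffZ_f_mul f0 f1 f2 f3 f4 f hf]

/-- recurrence with explicit indices -/
lemma rec5 (f0 f1 f2 f3 f4 : ℚ) (f : Polynomial ℚ)
    (hf : f = C f4 * X ^ 4 + C f3 * X ^ 3 + C f2 * X ^ 2 + C f1 * X + C f0)
    (n : ℕ) (hn : 1 ≤ n) (m0 m1 m2 m3 m4 : ℤ)
    (e1 : m1 = m0 - 1) (e2 : m2 = m0 - 2) (e3 : m3 = m0 - 3) (e4 : m4 = m0 - 4) :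
    (m0 : ℚ) * f0 * coeffZ (f ^ n) m0 + ((m0 : ℚ) - 1 - n) * f1 * coeffZ (f ^ n) m1
      + ((m0 : ℚ) - 2 - 2 * n) * f2 * coeffZ (f ^ n) m2
      + ((m0 : ℚ) - 3 - 3 * n) * f3 * coeffZ (f ^ n) m3
      + ((m0 : ℚ) - 4 - 4 * n) * f4 * coeffZ (f ^ n) m4 = 0 := by
  subst e1 e2 e3 e4
  have hd : f * derivative (f ^ n) = C (n : ℚ) * derivative f * f ^ n := by
    rw [derivative_pow]
    have h1 : f * f ^ (n - 1) = f ^ n := by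
      rw [← pow_succ']
      congr 1; omega
    calc f * (C (n : ℚ) * f ^ (n - 1) * derivative f)
        = C (n : ℚ) * derivative f * (f * f ^ (n - 1)) := by ring
      _ = C (n : ℚ) * derivative f * f ^ n := by rw [h1]
  have hr : C (n : ℚ) * derivative f * f ^ n
      = C ((n : ℚ) * (4 * f4)) * X ^ 3 * f ^ n + C ((n : ℚ) * (3 * f3)) * X ^ 2 * f ^ n
        + C ((n : ℚ) * (2 * f2)) * X ^ 1 * f ^ n + C ((n : ℚ) * f1) * X ^ 0 * f ^ n := by
    rw [hf]
    simp only [derivative_add, derivative_mul, derivative_C, derivative_X_pow, derivative_X, C_mul]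
    push_cast
    ring
  have H := congrArg (fun p => coeffZ p (m0 - 1)) hd
  rw [coeffZ_f_mul f0 f1 f2 f3 f4 f hf, hr, coeffZ_add, coeffZ_add, coeffZ_add,
    coeffZ_term, coeffZ_term, coeffZ_term, coeffZ_term,
    coeffZ_derivative, coeffZ_derivative, coeffZ_derivative, coeffZ_derivative,
    coeffZ_derivative] at H
  rw [show m0 - 1 + 1 = m0 from by ring, show m0 - 1 - 1 + 1 = m0 - 1 from by ring,
    show m0 - 1 - 2 + 1 = m0 - 2 from by ring, show m0 - 1 - 3 + 1 = m0 - 3 from by ring,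
    show m0 - 1 - 4 + 1 = m0 - 4 from by ring,
    show m0 - 1 - (3 : ℕ) = m0 - 4 from by push_cast; ring,
    show m0 - 1 - (2 : ℕ) = m0 - 3 from by push_cast; ring,
    show m0 - 1 - (1 : ℕ) = m0 - 2 from by push_cast; ring,
    show m0 - 1 - (0 : ℕ) = m0 - 1 from by push_cast; ring] at H
  push_cast at H
  linear_combination H

lemma vec4_smul_eq_vecMul (d b0 b1 b2 b3 a0 a1 a2 a3 : ℚ) (M : Matrix (Fin 4) (Fin 4) ℚ)
    (h0 : d * b0 = a0 * M 0 0 + a1 * M 1 0 + a2 * M 2 0 + a3 * M 3 0)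
    (h1 : d * b1 = a0 * M 0 1 + a1 * M 1 1 + a2 * M 2 1 + a3 * M 3 1)
    (h2 : d * b2 = a0 * M 0 2 + a1 * M 1 2 + a2 * M 2 2 + a3 * M 3 2)
    (h3 : d * b3 = a0 * M 0 3 + a1 * M 1 3 + a2 * M 2 3 + a3 * M 3 3) :
    d • (![b0, b1, b2, b3] : Fin 4 → ℚ) = Matrix.vecMul ![a0, a1, a2, a3] M := by
  funext i
  fin_cases i <;>
    simp only [Matrix.vecMul, dotProduct, Fin.sum_univ_four, Pi.smul_apply,
      smul_eq_mul, Matrix.cons_val_zero, Matrix.cons_val_one, Matrix.head_cons,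
      Matrix.cons_val_two, Matrix.tail_cons, Matrix.cons_val_three, Fin.isValue,
      Fin.mk_one, Fin.zero_eta]
  exacts [h0, h1, h2, h3]

/-- Genus 1 quartic model transition: D_n · v_{n+1} = v_n · M_n where
v_n = [fⁿ_{2n-3}, fⁿ_{2n-2}, fⁿ_{2n-1}, fⁿ_{2n}], D_n = 2(n+2)(2n+1)(2n+5)f₀f₄, and M_n is
the explicit 4×4 matrix. -/
theorem genus1_quartic_transition (f0 f1 f2 f3 f4 : ℚ) (h : f0 * f4 ≠ 0)
    (f : Polynomial ℚ)
    (hf : f = C f4 * X ^ 4 + C f3 * X ^ 3 + C f2 * X ^ 2 + C f1 * X + C f0)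
    (n : ℕ) (hn : 3 ≤ n)
    (J1 J2 J3 J4 : ℚ)
    (hJ1 : J1 = ((n : ℚ) + 1) * (2 * n + 1) * f0)
    (hJ2 : J2 = ((n : ℚ) + 1) * (2 * n + 1) * (2 * n + 5) * f0 * f4)
    (hJ3 : J3 = 2 * ((n : ℚ) + 1) * ((n : ℚ) + 2) * (2 * n + 5) * f0 * f4)
    (hJ4 : J4 = ((n : ℚ) + 2) * (2 * n + 5) * f4)
    (M : Matrix (Fin 4) (Fin 4) ℚ)
    (hM : M = !![(-((n : ℚ) + 3) * f3 ^ 2 + 4 * ((n : ℚ) + 2) * f2 * f4) * J1,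
                   f3 * J2, 4 * f4 * J3, (2 * (n : ℚ) + 3) * f1 * f4 * J4;
                 (-2 * f2 * f3 + 6 * ((n : ℚ) + 2) * f1 * f4) * J1,
                   2 * f2 * J2, 3 * f3 * J3,
                   (4 * (2 * (n : ℚ) + 1) * f0 * f4 + ((n : ℚ) + 2) * f1 * f3) * J4;
                 (((n : ℚ) - 1) * f1 * f3 + 8 * ((n : ℚ) + 2) * f0 * f4) * J1,
                   3 * f1 * J2, 2 * f2 * J3,
                   (3 * (2 * (n : ℚ) + 1) * f0 * f3 + f1 * f2) * J4;
                 2 * (n : ℚ) * f0 * f3 * J1, 4 * f0 * J2, f1 * J3,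
                   (2 * (2 * (n : ℚ) + 1) * f0 * f2 - (n : ℚ) * f1 ^ 2) * J4]) :
    (2 * ((n : ℚ) + 2) * (2 * (n : ℚ) + 1) * (2 * (n : ℚ) + 5) * f0 * f4) •
        (![coeffZ (f ^ (n + 1)) (2 * (n : ℤ) - 1),
           coeffZ (f ^ (n + 1)) (2 * (n : ℤ)),
           coeffZ (f ^ (n + 1)) (2 * (n : ℤ) + 1),
           coeffZ (f ^ (n + 1)) (2 * (n : ℤ) + 2)] : Fin 4 → ℚ) =
      Matrix.vecMul
        (![coeffZ (f ^ n) (2 * (n : ℤ) - 3),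
           coeffZ (f ^ n) (2 * (n : ℤ) - 2),
           coeffZ (f ^ n) (2 * (n : ℤ) - 1),
           coeffZ (f ^ n) (2 * (n : ℤ))] : Fin 4 → ℚ) M := by
  subst hJ1 hJ2 hJ3 hJ4
  have hn1 : 1 ≤ n := by omega
  have E0 := rec5 f0 f1 f2 f3 f4 f hf n hn1 (2 * (n : ℤ) - 1) (2 * (n : ℤ) - 2)
    (2 * (n : ℤ) - 3) (2 * (n : ℤ) - 4) (2 * (n : ℤ) - 5) (by ring) (by ring) (by ring) (by ring)
  have E1 := rec5 f0 f1 f2 f3 f4 f hf n hn1 (2 * (n : ℤ)) (2 * (n : ℤ) - 1)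
    (2 * (n : ℤ) - 2) (2 * (n : ℤ) - 3) (2 * (n : ℤ) - 4) (by ring) (by ring) (by ring) (by ring)
  have E2 := rec5 f0 f1 f2 f3 f4 f hf n hn1 (2 * (n : ℤ) + 1) (2 * (n : ℤ))
    (2 * (n : ℤ) - 1) (2 * (n : ℤ) - 2) (2 * (n : ℤ) - 3) (by ring) (by ring) (by ring) (by ring)
  have E3 := rec5 f0 f1 f2 f3 f4 f hf n hn1 (2 * (n : ℤ) + 2) (2 * (n : ℤ) + 1)
    (2 * (n : ℤ)) (2 * (n : ℤ) - 1) (2 * (n : ℤ) - 2) (by ring) (by ring) (by ring) (by ring)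
  have B0 := conv5 f0 f1 f2 f3 f4 f hf n (2 * (n : ℤ) - 1) (2 * (n : ℤ) - 2)
    (2 * (n : ℤ) - 3) (2 * (n : ℤ) - 4) (2 * (n : ℤ) - 5) (by ring) (by ring) (by ring) (by ring)
  have B1 := conv5 f0 f1 f2 f3 f4 f hf n (2 * (n : ℤ)) (2 * (n : ℤ) - 1)
    (2 * (n : ℤ) - 2) (2 * (n : ℤ) - 3) (2 * (n : ℤ) - 4) (by ring) (by ring) (by ring) (by ring)
  have B2 := conv5 f0 f1 f2 f3 f4 f hf n (2 * (n : ℤ) + 1) (2 * (n : ℤ))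
    (2 * (n : ℤ) - 1) (2 * (n : ℤ) - 2) (2 * (n : ℤ) - 3) (by ring) (by ring) (by ring) (by ring)
  have B3 := conv5 f0 f1 f2 f3 f4 f hf n (2 * (n : ℤ) + 2) (2 * (n : ℤ) + 1)
    (2 * (n : ℤ)) (2 * (n : ℤ) - 1) (2 * (n : ℤ) - 2) (by ring) (by ring) (by ring) (by ring)
  push_cast at E0 E1 E2 E3
  apply vec4_smul_eq_vecMul
  all_goals rw [hM]
  all_goals simp only [Matrix.cons_val', Matrix.cons_val_zero, Matrix.cons_val_one,
    Matrix.head_cons, Matrix.cons_val_two, Matrix.tail_cons, Matrix.cons_val_three,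
    Matrix.empty_val', Matrix.cons_val_fin_one, Matrix.head_fin_const, Matrix.of_apply,
    Fin.isValue]
  · linear_combination (2 * ((n : ℚ) + 2) * (2 * (n : ℚ) + 1) * (2 * (n : ℚ) + 5) * f0 * f4) * B0
      - 2 * f0 * f4 * (2 * (n : ℚ) + 1) * ((n : ℚ) + 2) * E0
      - f0 * f3 * (2 * (n : ℚ) + 1) * ((n : ℚ) + 1) * E1
  · linear_combination (2 * ((n : ℚ) + 2) * (2 * (n : ℚ) + 1) * (2 * (n : ℚ) + 5) * f0 * f4) * B1
      - f0 * f4 * (2 * (n : ℚ) + 1) * (2 * (n : ℚ) + 5) * E1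
  · linear_combination (2 * ((n : ℚ) + 2) * (2 * (n : ℚ) + 1) * (2 * (n : ℚ) + 5) * f0 * f4) * B2
      + 2 * f0 * f4 * (2 * (n : ℚ) + 5) * ((n : ℚ) + 2) * E2
  · have hne : ((n : ℚ) + 1) ≠ 0 := by positivity
    apply mul_left_cancel₀ hne
    linear_combination ((n : ℚ) + 1) *
        (2 * ((n : ℚ) + 2) * (2 * (n : ℚ) + 1) * (2 * (n : ℚ) + 5) * f0 * f4) * B3
      + ((n : ℚ) + 1) * f1 * f4 * (2 * (n : ℚ) + 5) * ((n : ℚ) + 2) * E2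
      + f0 * f4 * (2 * (n : ℚ) + 5) * (2 * (n : ℚ) + 1) * ((n : ℚ) + 2) * E3
end
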